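/- Let z = ⌈(C(t,a)/C(t-b,a))·ln C(t,a)⌉ where a + b ≤ t and a,b ≥ 1. Then there exists a family R of z subsets of [t], each of size b, such that for every subset S of [t] of size a, some member of R is disjoint from S. -/

import Mathlib

open Finset

lemma choose_identity (t a b : ℕ) (hab : a + b ≤ t) :
    t.choose b * (t - b).choose a = t.choose a * (t - a).choose b := by
  have h1 := Nat.choose_mul (n := t) (k := a + b) (s := b) (Nat.le_add_left _ _)
  have h2 := Nat.choose_mul (n := t) (k := a + b) (s := a) (Nat.le_add_right _ _)
  have hs : (a + b).choose b = (a + b).choose a := by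
    have := Nat.choose_symm (n := a + b) (k := b) (Nat.le_add_left _ _)
    simpa using this.symm
  simp only [Nat.add_sub_cancel, Nat.add_sub_cancel_left] at h1 h2
  rw [hs, h2] at h1
  exact h1.symm

lemma avg_step (t a b : ℕ) (hab : a + b ≤ t)
    (𝒮 : Finset (Finset (Fin t))) (h𝒮 : ∀ S ∈ 𝒮, S.card = a) :
    ∃ B : Finset (Fin t), B.card = b ∧
      ((t - b).choose a : ℝ) / (t.choose a : ℝ) * 𝒮.card ≤
        ((𝒮.filter (fun S => Disjoint B S)).card : ℝ) := by
  classical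
  set P : Finset (Finset (Fin t)) := Finset.powersetCard b Finset.univ with hP
  have hPcard : P.card = t.choose b := by
    simp [hP, Finset.card_powersetCard]
  have hPne : P.Nonempty := by
    rw [← Finset.card_pos, hPcard]
    exact Nat.choose_pos (by omega)
  have key : ∀ S ∈ 𝒮, (P.filter (fun B => Disjoint B S)).card = (t - a).choose b := by
    intro S hS
    have hfe : (P.filter (fun B => Disjoint B S)) = Finset.powersetCard b Sᶜ := by
      ext B
      rw [Finset.mem_filter, hP, Finset.mem_powersetCard_univ, Finset.mem_powersetCard]
      constructor
      · rintro ⟨hc, hd⟩; exact ⟨le_compl_iff_disjoint_right.2 hd, hc⟩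
      · rintro ⟨hsub, hc⟩; exact ⟨hc, le_compl_iff_disjoint_right.1 hsub⟩
    rw [hfe, Finset.card_powersetCard, Finset.card_compl, h𝒮 S hS, Fintype.card_fin]
  have hsum : ∑ B ∈ P, (𝒮.filter (fun S => Disjoint B S)).card
      = 𝒮.card * (t - a).choose b := by
    calc ∑ B ∈ P, (𝒮.filter (fun S => Disjoint B S)).card
        = ∑ B ∈ P, ∑ S ∈ 𝒮, if Disjoint B S then 1 else 0 := by
          refine Finset.sum_congr rfl fun B _ => ?_
          rw [Finset.card_filter]
      _ = ∑ S ∈ 𝒮, ∑ B ∈ P, if Disjoint B S then 1 else 0 := Finset.sum_comm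
      _ = ∑ S ∈ 𝒮, (t - a).choose b := by
          refine Finset.sum_congr rfl fun S hS => ?_
          rw [← Finset.card_filter, key S hS]
      _ = 𝒮.card * (t - a).choose b := by rw [Finset.sum_const, smul_eq_mul]
  have hchoosea : 0 < (t.choose a : ℝ) := by
    exact_mod_cast Nat.choose_pos (by omega)
  have hle : ∑ _B ∈ P, ((t - b).choose a : ℝ) / (t.choose a : ℝ) * 𝒮.card
      ≤ ∑ B ∈ P, ((𝒮.filter (fun S => Disjoint B S)).card : ℝ) := by
    have hid : (t.choose b : ℝ) * ((t - b).choose a : ℝ)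
        = (t.choose a : ℝ) * ((t - a).choose b : ℝ) := by
      exact_mod_cast choose_identity t a b hab
    have hsum' : (∑ B ∈ P, ((𝒮.filter (fun S => Disjoint B S)).card : ℝ))
        = (𝒮.card : ℝ) * ((t - a).choose b : ℝ) := by
      exact_mod_cast congrArg (Nat.cast (R := ℝ)) hsum
    rw [Finset.sum_const, nsmul_eq_mul, hPcard, hsum']
    refine le_of_eq ?_
    field_simp
    linear_combination (𝒮.card : ℝ) * hid
  obtain ⟨B, hBP, hB⟩ := Finset.exists_le_of_sum_le hPne hle
  exact ⟨B, by simpa [hP, Finset.mem_powersetCard_univ] using hBP, hB⟩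

lemma greedy (t a b : ℕ) (hab : a + b ≤ t) (ha : 1 ≤ a) :
    ∀ (z : ℕ) (𝒮 : Finset (Finset (Fin t))), (∀ S ∈ 𝒮, S.card = a) →
    ∃ R : Fin z → Finset (Fin t), (∀ i, (R i).card = b) ∧
      (((𝒮.filter (fun S => ∀ i, ¬ Disjoint (R i) S)).card : ℝ) ≤
        𝒮.card * (1 - ((t - b).choose a : ℝ) / (t.choose a : ℝ)) ^ z) := by
  classical
  intro z
  induction z with
  | zero =>
    intro 𝒮 h𝒮
    refine ⟨fun i => i.elim0, fun i => i.elim0, ?_⟩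
    simp only [pow_zero, mul_one]
    exact_mod_cast Finset.card_filter_le _ _
  | succ z ih =>
    intro 𝒮 h𝒮
    obtain ⟨B, hBcard, hBge⟩ := avg_step t a b hab 𝒮 h𝒮
    set 𝒮' := 𝒮.filter (fun S => ¬ Disjoint B S) with h𝒮'def
    obtain ⟨R', hR'card, hR'⟩ := ih 𝒮' (fun S hS => h𝒮 S (Finset.mem_filter.1 hS).1)
    refine ⟨Fin.cons B R', ?_, ?_⟩
    · intro i
      refine Fin.cases ?_ ?_ i
      · simpa using hBcard
      · intro j; simpa using hR'card j
    · set r : ℝ := ((t - b).choose a : ℝ) / (t.choose a : ℝ) with hr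
      have hr0 : 0 ≤ r := by
        apply div_nonneg <;> positivity
      have hr1 : r ≤ 1 := by
        rw [hr, div_le_one (by exact_mod_cast Nat.choose_pos (by omega : a ≤ t))]
        exact_mod_cast Nat.choose_le_choose a (Nat.sub_le t b)
      have hfe : 𝒮.filter (fun S => ∀ i, ¬ Disjoint (Fin.cons B R' i) S)
          = 𝒮'.filter (fun S => ∀ i, ¬ Disjoint (R' i) S) := by
        ext S
        simp only [Finset.mem_filter, h𝒮'def, Fin.forall_fin_succ, Fin.cons_zero,
          Fin.cons_succ, and_assoc]
      have hcard' : (𝒮'.card : ℝ) ≤ (1 - r) * 𝒮.card := by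
        have hsplit : 𝒮'.card + (𝒮.filter (fun S => Disjoint B S)).card = 𝒮.card := by
          rw [h𝒮'def, add_comm]
          exact Finset.card_filter_add_card_filter_not (fun S => Disjoint B S)
        have : (𝒮'.card : ℝ) = 𝒮.card - (𝒮.filter (fun S => Disjoint B S)).card := by
          have := congrArg (Nat.cast (R := ℝ)) hsplit
          push_cast at this
          linarith
        rw [this]
        nlinarith [hBge]
      rw [hfe]
      calc ((𝒮'.filter (fun S => ∀ i, ¬ Disjoint (R' i) S)).card : ℝ)
          ≤ 𝒮'.card * (1 - r) ^ z := hR'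
        _ ≤ ((1 - r) * 𝒮.card) * (1 - r) ^ z := by
            apply mul_le_mul_of_nonneg_right hcard'
            exact pow_nonneg (by linarith) z
        _ = 𝒮.card * (1 - r) ^ (z + 1) := by ring

/-- For `z = ⌈(C(t,a)/C(t-b,a))·ln C(t,a)⌉`, there exists an (ordered)
family of `z` many `b`-subsets of `[t]` such that every `a`-subset of `[t]`
is disjoint from some member of the family. -/
theorem stmt4 (t a b : ℕ) (ha : 1 ≤ a) (hb : 1 ≤ b) (hab : a + b ≤ t) :
    ∃ R : Fin (⌈((t.choose a : ℝ) / ((t - b).choose a : ℝ)) *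
              Real.log (t.choose a)⌉₊) → Finset (Fin t),
      (∀ i, (R i).card = b) ∧
      ∀ S : Finset (Fin t), S.card = a → ∃ i, Disjoint (R i) S := by
  classical
  set z : ℕ := ⌈((t.choose a : ℝ) / ((t - b).choose a : ℝ)) * Real.log (t.choose a)⌉₊ with hz
  set N : ℝ := (t.choose a : ℝ) with hN
  set C : ℝ := ((t - b).choose a : ℝ) with hC
  set r : ℝ := C / N with hr
  have hCpos : 0 < C := by
    rw [hC]; exact_mod_cast Nat.choose_pos (by omega : a ≤ t - b)
  have hN2 : 2 ≤ N := by
    rw [hN]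
    have h1 : (a + 1).choose a ≤ t.choose a := Nat.choose_le_choose a (by omega)
    rw [Nat.choose_succ_self_right] at h1
    have : 2 ≤ t.choose a := by omega
    exact_mod_cast this
  have hNpos : 0 < N := by linarith
  have hrpos : 0 < r := div_pos hCpos hNpos
  have hr1 : r ≤ 1 := by
    rw [hr, div_le_one hNpos, hN, hC]
    exact_mod_cast Nat.choose_le_choose a (Nat.sub_le t b)
  have hlogN : 0 < Real.log N := Real.log_pos (by linarith)
  have hz1 : 1 ≤ z := by
    rw [hz]
    refine Nat.one_le_ceil_iff.2 ?_
    exact mul_pos (div_pos hNpos hCpos) hlogN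
  have hzge : N / C * Real.log N ≤ (z : ℝ) := Nat.le_ceil _
  have hrz : Real.log N ≤ r * z := by
    have h1 : r * (N / C * Real.log N) ≤ r * z :=
      mul_le_mul_of_nonneg_left hzge hrpos.le
    have h2 : r * (N / C * Real.log N) = Real.log N := by
      rw [hr]; field_simp
    linarith
  have hkey : N * (1 - r) ^ z < 1 := by
    rcases eq_or_lt_of_le hr1 with heq | hlt
    · rw [heq]
      simp only [sub_self, zero_pow (by omega : z ≠ 0), mul_zero]
      norm_num
    · have h1 : (1 - r) ^ z < Real.exp (-r) ^ z := by
        refine pow_lt_pow_left₀ ?_ (by linarith) (by omega)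
        have := Real.add_one_lt_exp (x := -r) (by linarith)
        linarith
      have h2 : Real.exp (-r) ^ z = Real.exp (-(r * z)) := by
        rw [← Real.exp_nat_mul]; ring_nf
      have h3 : Real.exp (-(r * z)) ≤ Real.exp (-Real.log N) :=
        Real.exp_le_exp.2 (by linarith)
      have h4 : Real.exp (-Real.log N) = 1 / N := by
        rw [Real.exp_neg, Real.exp_log hNpos]
        ring
      calc N * (1 - r) ^ z < N * Real.exp (-r) ^ z := by
            apply mul_lt_mul_of_pos_left h1 hNpos
        _ ≤ N * (1 / N) := by
            rw [h2]
            exact mul_le_mul_of_nonneg_left (h3.trans_eq h4) hNpos.le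
        _ = 1 := by field_simp
  -- apply greedy
  set 𝒮 : Finset (Finset (Fin t)) := Finset.powersetCard a Finset.univ with h𝒮def
  have h𝒮 : ∀ S ∈ 𝒮, S.card = a := fun S hS => Finset.mem_powersetCard_univ.1 hS
  obtain ⟨R, hRcard, hRle⟩ := greedy t a b hab ha z 𝒮 h𝒮
  have h𝒮card : (𝒮.card : ℝ) = N := by
    rw [h𝒮def, Finset.card_powersetCard, Finset.card_univ, Fintype.card_fin, hN]
  have hempty : 𝒮.filter (fun S => ∀ i, ¬ Disjoint (R i) S) = ∅ := by
    rw [← Finset.card_eq_zero]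
    by_contra h
    have h1 : 1 ≤ ((𝒮.filter (fun S => ∀ i, ¬ Disjoint (R i) S)).card : ℝ) := by
      exact_mod_cast Nat.one_le_iff_ne_zero.2 h
    rw [h𝒮card] at hRle
    linarith
  refine ⟨R, hRcard, fun S hS => ?_⟩
  by_contra hcon
  push_neg at hcon
  have hSin : S ∈ 𝒮.filter (fun S => ∀ i, ¬ Disjoint (R i) S) :=
    Finset.mem_filter.2 ⟨Finset.mem_powersetCard_univ.2 hS, hcon⟩
  rw [hempty] at hSin
  exact absurd hSin (Finset.notMem_empty S)
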